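/- arXiv:1409.8625 — 3 statements merged into one kernel-verified Lean document; each statement's English description precedes it below -/
import Mathlib

section
/- (Lemma 1) Let Δ_t := ⟨q_{t−1}U_{i_t}A(xᵗ − xᵗ⁻¹), yᵗ⁺¹ − y⟩ − ⟨Ū_{i_t}Axᵗ, yᵗ − y⟩ + Σ_{i ≠ i_t}[J_i(y_iᵗ) − J_i(y_i)], where yᵗ⁺¹ is the dual update of the RPD algorithm determined by the choice of i_t, with xᵗ, xᵗ⁻¹, yᵗ fixed. If i_t is uniformly distributed on {1, …, p} (so that E_{i_t}[·] is the average over i_t ∈ {1, …, p}), then E_{i_t}[Δ_t] ≤ ⟨((1/p)q_{t−1} − (p−1)/p)Axᵗ − (1/p)q_{t−1}Axᵗ⁻¹, yᵗ − y⟩ + ((p−1)/p)[J(yᵗ) − J(y)] + (q_{t−1}²‖A‖₂²/(2pτ_t))‖xᵗ − xᵗ⁻¹‖₂² + (τ_t/2)E_{i_t}[‖yᵗ⁺¹ − yᵗ‖₂²]. -/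
open scoped RealInnerProductSpace BigOperators

noncomputable section

abbrev Primal (n : ℕ) := EuclideanSpace ℝ (Fin n)

abbrev DualSp {p : ℕ} (md : Fin p → ℕ) :=
  PiLp 2 (fun i => EuclideanSpace ℝ (Fin (md i)))

set_option maxHeartbeats 1000000 in
theorem rpd_lemma1
    (n p : ℕ) (hp : 0 < p) (md : Fin p → ℕ)
    (Ys : (i : Fin p) → Set (EuclideanSpace ℝ (Fin (md i))))
    (hYconv : ∀ i, Convex ℝ (Ys i)) (hYcl : ∀ i, IsClosed (Ys i))
    (Js : (i : Fin p) → EuclideanSpace ℝ (Fin (md i)) → ℝ)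
    (hJconv : ∀ i, ConvexOn ℝ Set.univ (Js i))
    (A : Primal n →L[ℝ] DualSp md)
    (qprev τt : ℝ) (hτt : 0 < τt)
    (xt xtm xbt : Primal n) (yt : DualSp md) (hyt : ∀ i, yt i ∈ Ys i)
    (ynext : Fin p → DualSp md)
    (hynext : ∀ i : Fin p,
      ynext i i ∈ Ys i ∧
      (∀ u ∈ Ys i,
        -⟪(A xbt) i, ynext i i⟫ + Js i (ynext i i) + τt / 2 * ‖ynext i i - yt i‖ ^ 2
        ≤ -⟪(A xbt) i, u⟫ + Js i u + τt / 2 * ‖u - yt i‖ ^ 2) ∧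
      (∀ j, j ≠ i → ynext i j = yt j))
    (yy : DualSp md) (hyy : ∀ i, yy i ∈ Ys i)
    :
    (∑ i : Fin p,
        (qprev * ⟪(A (xt - xtm)) i, ynext i i - yy i⟫
          - (∑ j ∈ Finset.univ.erase i, ⟪(A xt) j, yt j - yy j⟫)
          + ∑ j ∈ Finset.univ.erase i, (Js j (yt j) - Js j (yy j)))) / (p : ℝ)
      ≤ ⟪(qprev / (p : ℝ) - ((p : ℝ) - 1) / (p : ℝ)) • A xt - (qprev / (p : ℝ)) • A xtm,
            yt - yy⟫
        + ((p : ℝ) - 1) / (p : ℝ) * ((∑ i, Js i (yt i)) - ∑ i, Js i (yy i))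
        + qprev ^ 2 * ‖A‖ ^ 2 / (2 * (p : ℝ) * τt) * ‖xt - xtm‖ ^ 2
        + τt / 2 * ((∑ i : Fin p, ‖ynext i - yt‖ ^ 2) / (p : ℝ)) := by
  have hp' : (0 : ℝ) < p := by exact_mod_cast hp
  set x : Primal n := xt - xtm with hx
  set a : DualSp md := A x with ha
  -- erase sums
  have herase : ∀ (f : Fin p → ℝ),
      ∑ i : Fin p, ∑ j ∈ Finset.univ.erase i, f j = ((p : ℝ) - 1) * ∑ j, f j := by
    intro f
    have h1 : ∀ i : Fin p, ∑ j ∈ Finset.univ.erase i, f j = (∑ j, f j) - f i := by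
      intro i
      rw [Finset.sum_erase_eq_sub (Finset.mem_univ i)]
    calc ∑ i : Fin p, ∑ j ∈ Finset.univ.erase i, f j
        = ∑ i : Fin p, ((∑ j, f j) - f i) := by simp only [h1]
      _ = (p : ℝ) * (∑ j, f j) - ∑ j, f j := by
          rw [Finset.sum_sub_distrib, Finset.sum_const, Finset.card_univ, Fintype.card_fin,
            nsmul_eq_mul]
      _ = ((p : ℝ) - 1) * ∑ j, f j := by ring
  -- pointwise sub
  have hsub : ∀ (u v : DualSp md) (i : Fin p), (u - v) i = u i - v i := fun _ _ _ => rfl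
  -- inner products as sums
  have inner_sum : ∀ (u v : DualSp md), ⟪u, v⟫ = ∑ i, ⟪u i, v i⟫ := fun u v =>
    PiLp.inner_apply u v
  -- key per-index Young inequality
  have key : ∀ i : Fin p, qprev * ⟪a i, ynext i i - yt i⟫ ≤
      qprev ^ 2 / (2 * τt) * ‖a i‖ ^ 2 + τt / 2 * ‖ynext i - yt‖ ^ 2 := by
    intro i
    have hsq : ‖ynext i i - yt i‖ ^ 2 ≤ ‖ynext i - yt‖ ^ 2 := by
      rw [PiLp.norm_sq_eq_of_L2 _ (ynext i - yt)]
      exact Finset.single_le_sum (f := fun j => ‖(ynext i - yt) j‖ ^ 2)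
        (fun j _ => sq_nonneg _) (Finset.mem_univ i)
    have h1 : qprev * ⟪a i, ynext i i - yt i⟫ ≤ |qprev| * (‖a i‖ * ‖ynext i i - yt i‖) := by
      calc qprev * ⟪a i, ynext i i - yt i⟫ ≤ |qprev * ⟪a i, ynext i i - yt i⟫| := le_abs_self _
        _ = |qprev| * |⟪a i, ynext i i - yt i⟫| := abs_mul _ _
        _ ≤ |qprev| * (‖a i‖ * ‖ynext i i - yt i‖) :=
            mul_le_mul_of_nonneg_left (abs_real_inner_le_norm _ _) (abs_nonneg _)
    have h2 : |qprev| * (‖a i‖ * ‖ynext i i - yt i‖) ≤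
        qprev ^ 2 / (2 * τt) * ‖a i‖ ^ 2 + τt / 2 * ‖ynext i i - yt i‖ ^ 2 := by
      rw [div_mul_eq_mul_div, div_add' _ _ _ (by positivity : (2 * τt) ≠ 0)]
      rw [le_div_iff₀ (by positivity : (0:ℝ) < 2 * τt)]
      nlinarith [sq_nonneg (|qprev| * ‖a i‖ - τt * ‖ynext i i - yt i‖), sq_abs qprev,
        abs_nonneg qprev, norm_nonneg (a i), norm_nonneg (ynext i i - yt i)]
    have h3 : τt / 2 * ‖ynext i i - yt i‖ ^ 2 ≤ τt / 2 * ‖ynext i - yt‖ ^ 2 := by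
      have := hsq
      nlinarith
    linarith
  -- sum of squared components
  have hsum_a : ∑ i, ‖a i‖ ^ 2 = ‖a‖ ^ 2 := (PiLp.norm_sq_eq_of_L2 _ a).symm
  have hAnorm : ‖a‖ ^ 2 ≤ ‖A‖ ^ 2 * ‖x‖ ^ 2 := by
    have h := A.le_opNorm x
    nlinarith [norm_nonneg a, norm_nonneg (A : Primal n →L[ℝ] DualSp md), norm_nonneg x]
  have sumkey : ∑ i : Fin p, qprev * ⟪a i, ynext i i - yt i⟫ ≤
      qprev ^ 2 / (2 * τt) * (‖A‖ ^ 2 * ‖x‖ ^ 2) + τt / 2 * ∑ i, ‖ynext i - yt‖ ^ 2 := by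
    calc ∑ i : Fin p, qprev * ⟪a i, ynext i i - yt i⟫
        ≤ ∑ i : Fin p, (qprev ^ 2 / (2 * τt) * ‖a i‖ ^ 2 + τt / 2 * ‖ynext i - yt‖ ^ 2) :=
          Finset.sum_le_sum fun i _ => key i
      _ = qprev ^ 2 / (2 * τt) * ‖a‖ ^ 2 + τt / 2 * ∑ i, ‖ynext i - yt‖ ^ 2 := by
          rw [Finset.sum_add_distrib, ← Finset.mul_sum, ← Finset.mul_sum, hsum_a]
      _ ≤ qprev ^ 2 / (2 * τt) * (‖A‖ ^ 2 * ‖x‖ ^ 2) + τt / 2 * ∑ i, ‖ynext i - yt‖ ^ 2 := by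
          have hq : 0 ≤ qprev ^ 2 / (2 * τt) := by positivity
          nlinarith
  -- split the main inner product term
  have hsplit : ∀ i : Fin p, ⟪a i, ynext i i - yy i⟫ =
      ⟪a i, ynext i i - yt i⟫ + ⟪a i, yt i - yy i⟫ := by
    intro i
    rw [← inner_add_right]
    congr 1
    abel
  -- rewrite the LHS sum
  have hLHS : (∑ i : Fin p,
        (qprev * ⟪a i, ynext i i - yy i⟫
          - (∑ j ∈ Finset.univ.erase i, ⟪(A xt) j, yt j - yy j⟫)
          + ∑ j ∈ Finset.univ.erase i, (Js j (yt j) - Js j (yy j))))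
      = (∑ i : Fin p, qprev * ⟪a i, ynext i i - yt i⟫)
        + qprev * ⟪a, yt - yy⟫
        - ((p : ℝ) - 1) * ⟪A xt, yt - yy⟫
        + ((p : ℝ) - 1) * ((∑ i, Js i (yt i)) - ∑ i, Js i (yy i)) := by
    have e1 : ∑ i : Fin p, ∑ j ∈ Finset.univ.erase i, ⟪(A xt) j, yt j - yy j⟫
        = ((p : ℝ) - 1) * ⟪A xt, yt - yy⟫ := by
      rw [herase, inner_sum]
      refine congrArg _ (Finset.sum_congr rfl fun j _ => ?_)
      rw [hsub]
    have e2 : ∑ i : Fin p, ∑ j ∈ Finset.univ.erase i, (Js j (yt j) - Js j (yy j))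
        = ((p : ℝ) - 1) * ((∑ i, Js i (yt i)) - ∑ i, Js i (yy i)) := by
      rw [herase, Finset.sum_sub_distrib]
    have e3 : ∑ i : Fin p, qprev * ⟪a i, ynext i i - yy i⟫
        = (∑ i : Fin p, qprev * ⟪a i, ynext i i - yt i⟫) + qprev * ⟪a, yt - yy⟫ := by
      rw [inner_sum, Finset.mul_sum, ← Finset.sum_add_distrib]
      refine Finset.sum_congr rfl fun i _ => ?_
      rw [hsub, hsplit]
      ring
    rw [Finset.sum_add_distrib, Finset.sum_sub_distrib, e1, e2, e3]
  -- rewrite the RHS inner product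
  have hRHS : ⟪(qprev / (p : ℝ) - ((p : ℝ) - 1) / (p : ℝ)) • A xt - (qprev / (p : ℝ)) • A xtm,
        yt - yy⟫
      = (qprev / (p : ℝ)) * ⟪a, yt - yy⟫ - (((p : ℝ) - 1) / (p : ℝ)) * ⟪A xt, yt - yy⟫ := by
    have haxy : ⟪a, yt - yy⟫ = ⟪A xt, yt - yy⟫ - ⟪A xtm, yt - yy⟫ := by
      rw [ha, hx, map_sub, inner_sub_left]
    rw [inner_sub_left, real_inner_smul_left, real_inner_smul_left, haxy]
    ring
  rw [hLHS, hRHS]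
  rw [div_le_iff₀ hp']
  have expand : ∀ I1 I2 JJ SS NN YY : ℝ,
      ((qprev / (p : ℝ)) * I1 - (((p : ℝ) - 1) / (p : ℝ)) * I2
        + ((p : ℝ) - 1) / (p : ℝ) * JJ
        + qprev ^ 2 * NN / (2 * (p : ℝ) * τt) * SS
        + τt / 2 * (YY / (p : ℝ))) * (p : ℝ)
      = qprev * I1 - ((p : ℝ) - 1) * I2 + ((p : ℝ) - 1) * JJ
        + qprev ^ 2 / (2 * τt) * (NN * SS) + τt / 2 * YY := by
    intro I1 I2 JJ SS NN YY
    have hps : (p : ℝ) ≠ 0 := ne_of_gt hp'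
    have hts : τt ≠ 0 := ne_of_gt hτt
    field_simp
  rw [expand ⟪a, yt - yy⟫ ⟪A xt, yt - yy⟫ ((∑ i, Js i (yt i)) - ∑ i, Js i (yy i))
    (‖x‖ ^ 2) (‖A‖ ^ 2) (∑ i : Fin p, ‖ynext i - yt‖ ^ 2)]
  linarith [sumkey]
end
end

section
/- (Lemma 2) Suppose each J_i is 1-strongly convex and θ_t ≥ 0. Let Δ̃_t := ⟨q_{t−1}θ_t U_{i_t}A(xᵗ − xᵗ⁻¹), yᵗ⁺¹ − y⟩ − ⟨θ_t Ū_{i_t}Axᵗ, yᵗ − y⟩ + Σ_{i ≠ i_t} θ_t [J_i(y_iᵗ) − J_i(y_i) + (1/2)‖y_i − y_iᵗ⁺¹‖₂²], where yᵗ⁺¹ is the dual update of the RPD algorithm determined by the choice of i_t, with xᵗ, xᵗ⁻¹, yᵗ fixed. If i_t is uniformly distributed on {1, …, p} (so that E_{i_t}[·] is the average over i_t ∈ {1, …, p}), then E_{i_t}[Δ̃_t] ≤ ⟨((1/p)q_{t−1}θ_t − ((p−1)/p)θ_t)Axᵗ − (1/p)q_{t−1}θ_t Axᵗ⁻¹,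 yᵗ − y⟩ + ((p−1)/p)θ_t[J(yᵗ) − J(y)] + (q_{t−1}²θ_t‖A‖₂²/(2pτ_t))‖xᵗ − xᵗ⁻¹‖₂² + (τ_tθ_t/2)E_{i_t}[‖yᵗ⁺¹ − yᵗ‖₂²] + ((p−1)/(2p))θ_t‖y − yᵗ‖₂². -/
open scoped RealInnerProductSpace BigOperators

noncomputable section

set_option maxHeartbeats 1000000 in
theorem rpd_lemma2
    (n p : ℕ) (hp : 0 < p) (md : Fin p → ℕ)
    (Ys : (i : Fin p) → Set (EuclideanSpace ℝ (Fin (md i))))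
    (hYconv : ∀ i, Convex ℝ (Ys i)) (hYcl : ∀ i, IsClosed (Ys i))
    (Js : (i : Fin p) → EuclideanSpace ℝ (Fin (md i)) → ℝ)
    (hJstrong : ∀ i, StrongConvexOn Set.univ 1 (Js i))
    (A : Primal n →L[ℝ] DualSp md)
    (qprev τt : ℝ) (hτt : 0 < τt)
    (xt xtm xbt : Primal n) (yt : DualSp md) (hyt : ∀ i, yt i ∈ Ys i)
    (ynext : Fin p → DualSp md)
    (hynext : ∀ i : Fin p,
      ynext i i ∈ Ys i ∧
      (∀ u ∈ Ys i,
        -⟪(A xbt) i, ynext i i⟫ + Js i (ynext i i) + τt / 2 * ‖ynext i i - yt i‖ ^ 2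
        ≤ -⟪(A xbt) i, u⟫ + Js i u + τt / 2 * ‖u - yt i‖ ^ 2) ∧
      (∀ j, j ≠ i → ynext i j = yt j))
    (yy : DualSp md) (hyy : ∀ i, yy i ∈ Ys i)
    (θt : ℝ) (hθt : 0 ≤ θt) :
    (∑ i : Fin p,
        (qprev * θt * ⟪(A (xt - xtm)) i, ynext i i - yy i⟫
          - θt * (∑ j ∈ Finset.univ.erase i, ⟪(A xt) j, yt j - yy j⟫)
          + ∑ j ∈ Finset.univ.erase i,
              θt * (Js j (yt j) - Js j (yy j) + 1 / 2 * ‖yy j - ynext i j‖ ^ 2))) / (p : ℝ)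
      ≤ ⟪(qprev / (p : ℝ) * θt - ((p : ℝ) - 1) / (p : ℝ) * θt) • A xt
            - (qprev / (p : ℝ) * θt) • A xtm, yt - yy⟫
        + ((p : ℝ) - 1) / (p : ℝ) * θt * ((∑ i, Js i (yt i)) - ∑ i, Js i (yy i))
        + qprev ^ 2 * θt * ‖A‖ ^ 2 / (2 * (p : ℝ) * τt) * ‖xt - xtm‖ ^ 2
        + τt * θt / 2 * ((∑ i : Fin p, ‖ynext i - yt‖ ^ 2) / (p : ℝ))
        + ((p : ℝ) - 1) / (2 * (p : ℝ)) * θt * ‖yy - yt‖ ^ 2 := by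
  have hpR : (0 : ℝ) < (p : ℝ) := by exact_mod_cast hp
  set v : Primal n := xt - xtm with hv
  have herase : ∀ (f : Fin p → ℝ) (i : Fin p),
      ∑ j ∈ Finset.univ.erase i, f j = (∑ j, f j) - f i := by
    intro f i
    rw [← Finset.add_sum_erase _ f (Finset.mem_univ i)]; ring
  set G : ℝ := ∑ j, ⟪(A xt) j, yt j - yy j⟫ with hG
  set F : Fin p → ℝ := fun j => Js j (yt j) - Js j (yy j) + 1 / 2 * ‖yy j - yt j‖ ^ 2 with hF
  set H : ℝ := ∑ j, F j with hH
  set C : ℝ := qprev ^ 2 * θt * ‖A‖ ^ 2 / (2 * τt) * ‖v‖ ^ 2 with hC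
  -- per-i key inequality (Young with block norm)
  have key : ∀ i : Fin p,
      qprev * θt * ⟪(A v) i, ynext i i - yy i⟫
        ≤ qprev * θt * ⟪(A v) i, yt i - yy i⟫
          + qprev ^ 2 * θt / (2 * τt) * ‖(A v) i‖ ^ 2
          + τt * θt / 2 * ‖ynext i - yt‖ ^ 2 := by
    intro i
    have hsplit : ⟪(A v) i, ynext i i - yy i⟫
        = ⟪(A v) i, ynext i i - yt i⟫ + ⟪(A v) i, yt i - yy i⟫ := by
      rw [← inner_add_right]; congr 1; abel
    have habs : |⟪(A v) i, ynext i i - yt i⟫| ≤ ‖(A v) i‖ * ‖ynext i i - yt i‖ :=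
      abs_real_inner_le_norm _ _
    have hblock : ‖ynext i - yt‖ ^ 2 = ‖ynext i i - yt i‖ ^ 2 := by
      rw [PiLp.norm_sq_eq_of_L2]
      refine Finset.sum_eq_single i (fun j _ hj => ?_) (by simp)
      have hz : ynext i j - yt j = 0 := by rw [(hynext i).2.2 j hj, sub_self]
      have he : (ynext i - yt) j = ynext i j - yt j := rfl
      rw [he, hz]; simp
    set s : ℝ := ‖ynext i i - yt i‖ with hs
    set w : ℝ := ‖(A v) i‖ with hw
    have hb : qprev * ⟪(A v) i, ynext i i - yt i⟫ ≤ |qprev| * (w * s) := by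
      calc qprev * ⟪(A v) i, ynext i i - yt i⟫
          ≤ |qprev * ⟪(A v) i, ynext i i - yt i⟫| := le_abs_self _
        _ = |qprev| * |⟪(A v) i, ynext i i - yt i⟫| := abs_mul _ _
        _ ≤ |qprev| * (w * s) := mul_le_mul_of_nonneg_left habs (abs_nonneg _)
    have hyoung : |qprev| * (w * s) ≤ qprev ^ 2 * w ^ 2 / (2 * τt) + τt / 2 * s ^ 2 := by
      rw [div_add' _ _ _ (by positivity), le_div_iff₀ (by positivity)]
      nlinarith [sq_nonneg (|qprev| * w - τt * s), sq_abs qprev]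
    have h1 : qprev * ⟪(A v) i, ynext i i - yt i⟫
        ≤ qprev ^ 2 * w ^ 2 / (2 * τt) + τt / 2 * s ^ 2 := hb.trans hyoung
    have h2 : θt * (qprev * ⟪(A v) i, ynext i i - yt i⟫)
        ≤ θt * (qprev ^ 2 * w ^ 2 / (2 * τt) + τt / 2 * s ^ 2) :=
      mul_le_mul_of_nonneg_left h1 hθt
    have h3 : θt * (qprev ^ 2 * w ^ 2 / (2 * τt) + τt / 2 * s ^ 2)
        = qprev ^ 2 * θt / (2 * τt) * w ^ 2 + τt * θt / 2 * s ^ 2 := by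
      field_simp
    have h4 : qprev * θt * (⟪(A v) i, ynext i i - yt i⟫ + ⟪(A v) i, yt i - yy i⟫)
        = θt * (qprev * ⟪(A v) i, ynext i i - yt i⟫) + qprev * θt * ⟪(A v) i, yt i - yy i⟫ := by
      ring
    rw [hsplit, hblock]
    linarith [h2, h3, h4]
  -- rewrite each summand
  have hterm : ∀ i : Fin p,
      (qprev * θt * ⟪(A v) i, ynext i i - yy i⟫
          - θt * (∑ j ∈ Finset.univ.erase i, ⟪(A xt) j, yt j - yy j⟫)
          + ∑ j ∈ Finset.univ.erase i,
              θt * (Js j (yt j) - Js j (yy j) + 1 / 2 * ‖yy j - ynext i j‖ ^ 2))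
        = qprev * θt * ⟪(A v) i, ynext i i - yy i⟫
          - θt * (G - ⟪(A xt) i, yt i - yy i⟫) + θt * (H - F i) := by
    intro i
    have e1 : ∑ j ∈ Finset.univ.erase i, ⟪(A xt) j, yt j - yy j⟫
        = G - ⟪(A xt) i, yt i - yy i⟫ := herase _ i
    have e2 : ∑ j ∈ Finset.univ.erase i,
        θt * (Js j (yt j) - Js j (yy j) + 1 / 2 * ‖yy j - ynext i j‖ ^ 2)
        = θt * (H - F i) := by
      have hc : ∀ j ∈ Finset.univ.erase i,
          θt * (Js j (yt j) - Js j (yy j) + 1 / 2 * ‖yy j - ynext i j‖ ^ 2) = θt * F j := by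
        intro j hj
        rw [(hynext i).2.2 j (Finset.ne_of_mem_erase hj)]
      rw [Finset.sum_congr rfl hc, ← Finset.mul_sum, herase F i]
    rw [e1, e2]
  have hsum1 : ∀ (f : Fin p → ℝ), (∑ i : Fin p, ((∑ j, f j) - f i)) = ((p : ℝ) - 1) * ∑ j, f j := by
    intro f
    rw [Finset.sum_sub_distrib, Finset.sum_const, Finset.card_univ, Fintype.card_fin,
      nsmul_eq_mul]
    ring
  -- bound the total sum
  have hLHS : (∑ i : Fin p,
        (qprev * θt * ⟪(A v) i, ynext i i - yy i⟫
          - θt * (∑ j ∈ Finset.univ.erase i, ⟪(A xt) j, yt j - yy j⟫)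
          + ∑ j ∈ Finset.univ.erase i,
              θt * (Js j (yt j) - Js j (yy j) + 1 / 2 * ‖yy j - ynext i j‖ ^ 2)))
      ≤ qprev * θt * ⟪A v, yt - yy⟫ + C
          + τt * θt / 2 * (∑ i : Fin p, ‖ynext i - yt‖ ^ 2)
          - ((p : ℝ) - 1) * θt * G + ((p : ℝ) - 1) * θt * H := by
    rw [Finset.sum_congr rfl (fun i _ => hterm i)]
    have hs2 : ∑ i : Fin p, (θt * (G - ⟪(A xt) i, yt i - yy i⟫)) = θt * (((p : ℝ) - 1) * G) := by
      rw [← Finset.mul_sum, hsum1 (fun i => ⟪(A xt) i, yt i - yy i⟫)]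
    have hs3 : ∑ i : Fin p, (θt * (H - F i)) = θt * (((p : ℝ) - 1) * H) := by
      rw [← Finset.mul_sum, hsum1 F]
    have hinnersum : ∑ i : Fin p, ⟪(A v) i, yt i - yy i⟫ = ⟪A v, yt - yy⟫ := by
      rw [PiLp.inner_apply]; rfl
    have hAvsum : ∑ i : Fin p, ‖(A v) i‖ ^ 2 = ‖A v‖ ^ 2 :=
      (PiLp.norm_sq_eq_of_L2 _ (A v)).symm
    have hAv2 : qprev ^ 2 * θt / (2 * τt) * ‖A v‖ ^ 2 ≤ C := by
      rw [hC]
      have h5 : ‖A v‖ ^ 2 ≤ ‖A‖ ^ 2 * ‖v‖ ^ 2 := by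
        nlinarith [A.le_opNorm v, norm_nonneg (A v), norm_nonneg v,
          mul_nonneg (norm_nonneg A) (norm_nonneg v)]
      have h6 : (0 : ℝ) ≤ qprev ^ 2 * θt / (2 * τt) := by positivity
      calc qprev ^ 2 * θt / (2 * τt) * ‖A v‖ ^ 2
          ≤ qprev ^ 2 * θt / (2 * τt) * (‖A‖ ^ 2 * ‖v‖ ^ 2) := mul_le_mul_of_nonneg_left h5 h6
        _ = qprev ^ 2 * θt * ‖A‖ ^ 2 / (2 * τt) * ‖v‖ ^ 2 := by ring
    calc ∑ i : Fin p, (qprev * θt * ⟪(A v) i, ynext i i - yy i⟫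
            - θt * (G - ⟪(A xt) i, yt i - yy i⟫) + θt * (H - F i))
        = (∑ i : Fin p, qprev * θt * ⟪(A v) i, ynext i i - yy i⟫)
          - θt * (((p : ℝ) - 1) * G) + θt * (((p : ℝ) - 1) * H) := by
          rw [Finset.sum_add_distrib, Finset.sum_sub_distrib, hs2, hs3]
      _ ≤ (∑ i : Fin p, (qprev * θt * ⟪(A v) i, yt i - yy i⟫
            + qprev ^ 2 * θt / (2 * τt) * ‖(A v) i‖ ^ 2
            + τt * θt / 2 * ‖ynext i - yt‖ ^ 2))
          - θt * (((p : ℝ) - 1) * G) + θt * (((p : ℝ) - 1) * H) := by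
          have := Finset.sum_le_sum (fun i (_ : i ∈ Finset.univ) => key i)
          linarith
      _ = qprev * θt * ⟪A v, yt - yy⟫ + qprev ^ 2 * θt / (2 * τt) * ‖A v‖ ^ 2
          + τt * θt / 2 * (∑ i : Fin p, ‖ynext i - yt‖ ^ 2)
          - ((p : ℝ) - 1) * θt * G + ((p : ℝ) - 1) * θt * H := by
          rw [Finset.sum_add_distrib, Finset.sum_add_distrib, ← Finset.mul_sum,
            ← Finset.mul_sum, ← Finset.mul_sum, hinnersum, hAvsum]
          ring
      _ ≤ qprev * θt * ⟪A v, yt - yy⟫ + C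
          + τt * θt / 2 * (∑ i : Fin p, ‖ynext i - yt‖ ^ 2)
          - ((p : ℝ) - 1) * θt * G + ((p : ℝ) - 1) * θt * H := by
          linarith [hAv2]
  -- identify RHS pieces
  have hGinner : G = ⟪A xt, yt - yy⟫ := by
    rw [hG, PiLp.inner_apply]; rfl
  have hvsplit : ⟪A v, yt - yy⟫ = ⟪A xt, yt - yy⟫ - ⟪A xtm, yt - yy⟫ := by
    rw [hv, map_sub, inner_sub_left]
  have hHsplit : H = ((∑ i, Js i (yt i)) - ∑ i, Js i (yy i)) + 1 / 2 * ‖yy - yt‖ ^ 2 := by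
    have hnorm : ‖yy - yt‖ ^ 2 = ∑ j, ‖yy j - yt j‖ ^ 2 := by
      rw [PiLp.norm_sq_eq_of_L2]; rfl
    have h1 : H = ∑ j, ((Js j (yt j) - Js j (yy j)) + 1 / 2 * ‖yy j - yt j‖ ^ 2) := rfl
    rw [h1, Finset.sum_add_distrib, Finset.sum_sub_distrib, hnorm, Finset.mul_sum]
  have hRinner : ⟪(qprev / (p : ℝ) * θt - ((p : ℝ) - 1) / (p : ℝ) * θt) • A xt
            - (qprev / (p : ℝ) * θt) • A xtm, yt - yy⟫
      = (qprev / (p : ℝ) * θt - ((p : ℝ) - 1) / (p : ℝ) * θt) * ⟪A xt, yt - yy⟫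
        - qprev / (p : ℝ) * θt * ⟪A xtm, yt - yy⟫ := by
    rw [inner_sub_left, real_inner_smul_left, real_inner_smul_left]
  set I1 : ℝ := ⟪A xt, yt - yy⟫ with hI1
  set I2 : ℝ := ⟪A xtm, yt - yy⟫ with hI2
  set Jt : ℝ := ∑ i, Js i (yt i) with hJt
  set Jy : ℝ := ∑ i, Js i (yy i) with hJy
  set N1 : ℝ := ‖yy - yt‖ ^ 2 with hN1
  set S : ℝ := ∑ i : Fin p, ‖ynext i - yt‖ ^ 2 with hS
  rw [div_le_iff₀ hpR]
  calc (∑ i : Fin p,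
        (qprev * θt * ⟪(A v) i, ynext i i - yy i⟫
          - θt * (∑ j ∈ Finset.univ.erase i, ⟪(A xt) j, yt j - yy j⟫)
          + ∑ j ∈ Finset.univ.erase i,
              θt * (Js j (yt j) - Js j (yy j) + 1 / 2 * ‖yy j - ynext i j‖ ^ 2)))
      ≤ qprev * θt * ⟪A v, yt - yy⟫ + C + τt * θt / 2 * S
          - ((p : ℝ) - 1) * θt * G + ((p : ℝ) - 1) * θt * H := hLHS
    _ = (⟪(qprev / (p : ℝ) * θt - ((p : ℝ) - 1) / (p : ℝ) * θt) • A xt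
            - (qprev / (p : ℝ) * θt) • A xtm, yt - yy⟫
        + ((p : ℝ) - 1) / (p : ℝ) * θt * (Jt - Jy)
        + qprev ^ 2 * θt * ‖A‖ ^ 2 / (2 * (p : ℝ) * τt) * ‖v‖ ^ 2
        + τt * θt / 2 * (S / (p : ℝ))
        + ((p : ℝ) - 1) / (2 * (p : ℝ)) * θt * N1) * (p : ℝ) := by
        rw [hRinner, hvsplit, hHsplit, hGinner, hC]
        field_simp
        ring
end
end

section
/- (Lemma, non-Euclidean expectation bound) In the Bregman setup, let Δ_t := ⟨q_{t−1}U_{i_t}A(xᵗ − xᵗ⁻¹), yᵗ⁺¹ − y⟩ − ⟨Ū_{i_t}Axᵗ, yᵗ − y⟩ + Σ_{i ≠ i_t}[J_i(y_iᵗ) − J_i(y_i)], where yᵗ⁺¹ is the dual update of the non-Euclidean RPD algorithm determined by the choice of i_t, with xᵗ, xᵗ⁻¹, yᵗ fixed. If i_t is uniformly distributed on {1, …, p} (so that E_{i_t}[·] is the average over i_t ∈ {1, …, p}), then E_{i_t}[Δ_t] ≤ ⟨((1/p)q_{t−1} − (p−1)/p)Axᵗ − (1/p)q_{t−1}Axᵗ⁻¹,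 yᵗ − y⟩ + ((p−1)/p)[J(yᵗ) − J(y)] + (q_{t−1}²‖A‖²/(2pτ_t))‖xᵗ − xᵗ⁻¹‖² + (τ_t/2)E_{i_t}[‖yᵗ⁺¹ − yᵗ‖²]. -/
open scoped RealInnerProductSpace BigOperators

noncomputable section

variable {m : ℕ}

lemma myNB_zero (nB : EuclideanSpace ℝ (Fin m) → ℝ)
    (hsmul : ∀ (c : ℝ) v, nB (c • v) = |c| * nB v) : nB 0 = 0 := by
  have := hsmul 0 0
  simpa using this

lemma myNB_neg (nB : EuclideanSpace ℝ (Fin m) → ℝ)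
    (hsmul : ∀ (c : ℝ) v, nB (c • v) = |c| * nB v) (v : EuclideanSpace ℝ (Fin m)) :
    nB (-v) = nB v := by
  have := hsmul (-1) v
  simpa using this

lemma myNB_sum (nB : EuclideanSpace ℝ (Fin m) → ℝ)
    (hadd : ∀ v w, nB (v + w) ≤ nB v + nB w)
    (hsmul : ∀ (c : ℝ) v, nB (c • v) = |c| * nB v)
    {ι : Type*} (s : Finset ι) (f : ι → EuclideanSpace ℝ (Fin m)) :
    nB (∑ k ∈ s, f k) ≤ ∑ k ∈ s, nB (f k) := by
  induction s using Finset.cons_induction with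
  | empty => simp [myNB_zero nB hsmul]
  | cons a s ha ih =>
      rw [Finset.sum_cons, Finset.sum_cons]
      exact le_trans (hadd _ _) (by linarith)

lemma myNB_upper (nB : EuclideanSpace ℝ (Fin m) → ℝ)
    (h0 : ∀ v, 0 ≤ nB v)
    (hadd : ∀ v w, nB (v + w) ≤ nB v + nB w)
    (hsmul : ∀ (c : ℝ) v, nB (c • v) = |c| * nB v) :
    ∃ C : ℝ, 0 ≤ C ∧ ∀ u, nB u ≤ C * ‖u‖ := by
  refine ⟨∑ k : Fin m, nB (EuclideanSpace.single k 1), Finset.sum_nonneg fun k _ => h0 _, ?_⟩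
  intro u
  have hrepr : u = ∑ k : Fin m, u k • EuclideanSpace.single k (1:ℝ) := by
    ext x
    rw [WithLp.ofLp_sum, Finset.sum_apply]
    simp [EuclideanSpace.single_apply]
  have hcoord : ∀ k, |u k| ≤ ‖u‖ := by
    intro k
    have := EuclideanSpace.norm_eq u
    rw [this]
    have h1 : |u k| = Real.sqrt (u k ^ 2) := by
      rw [Real.sqrt_sq_eq_abs]
    rw [h1]
    apply Real.sqrt_le_sqrt
    have : u k ^ 2 ≤ ∑ j : Fin m, u j ^ 2 :=
      Finset.single_le_sum (f := fun j => u j ^ 2) (fun j _ => sq_nonneg _) (Finset.mem_univ k)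
    simpa [sq_abs] using this
  have hstep : nB u ≤ ∑ k : Fin m, nB (u k • EuclideanSpace.single k (1:ℝ)) := by
    conv_lhs => rw [hrepr]
    exact myNB_sum nB hadd hsmul _ _
  calc nB u ≤ ∑ k : Fin m, nB (u k • EuclideanSpace.single k (1:ℝ)) := hstep
    _ ≤ ∑ k : Fin m, ‖u‖ * nB (EuclideanSpace.single k 1) := by
        apply Finset.sum_le_sum
        intro k _
        rw [hsmul]
        exact mul_le_mul_of_nonneg_right (hcoord k) (h0 _)
    _ = (∑ k : Fin m, nB (EuclideanSpace.single k 1)) * ‖u‖ := by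
        rw [Finset.sum_mul]
        simp [mul_comm]

lemma myNB_lower (nB : EuclideanSpace ℝ (Fin m) → ℝ)
    (h0 : ∀ v, 0 ≤ nB v)
    (hadd : ∀ v w, nB (v + w) ≤ nB v + nB w)
    (hsmul : ∀ (c : ℝ) v, nB (c • v) = |c| * nB v)
    (hdef : ∀ v, nB v = 0 → v = 0) :
    ∃ c : ℝ, 0 < c ∧ ∀ u, c * ‖u‖ ≤ nB u := by
  by_cases hm : ∀ u : EuclideanSpace ℝ (Fin m), u = 0
  · refine ⟨1, one_pos, fun u => ?_⟩
    rw [hm u, myNB_zero nB hsmul]; simp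
  · push_neg at hm
    obtain ⟨u₁, hu₁⟩ := hm
    haveI : Nontrivial (EuclideanSpace ℝ (Fin m)) := ⟨⟨u₁, 0, hu₁⟩⟩
    obtain ⟨C, hC0, hC⟩ := myNB_upper nB h0 hadd hsmul
    have hcont : Continuous nB := by
      have hlip : LipschitzWith C.toNNReal nB := by
        apply LipschitzWith.of_dist_le_mul
        intro x y
        rw [Real.dist_eq, dist_eq_norm]
        have h1 : nB x - nB y ≤ nB (x - y) := by
          have := hadd (x - y) y
          simp only [sub_add_cancel] at this
          linarith
        have h2 : nB y - nB x ≤ nB (x - y) := by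
          have := hadd (y - x) x
          simp only [sub_add_cancel] at this
          have hne : nB (y - x) = nB (x - y) := by
            rw [← myNB_neg nB hsmul (x - y), neg_sub]
          linarith
        have habs : |nB x - nB y| ≤ nB (x - y) := abs_sub_le_iff.2 ⟨h1, h2⟩
        have : nB (x - y) ≤ C * ‖x - y‖ := hC _
        have hCco : (C.toNNReal : ℝ) = C := Real.coe_toNNReal C hC0
        rw [hCco]
        linarith
      exact hlip.continuous
    have hsph : (Metric.sphere (0 : EuclideanSpace ℝ (Fin m)) 1).Nonempty :=
      NormedSpace.sphere_nonempty.mpr zero_le_one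
    obtain ⟨u₀, hu₀mem, hu₀min⟩ :=
      (isCompact_sphere (0 : EuclideanSpace ℝ (Fin m)) 1).exists_isMinOn hsph hcont.continuousOn
    have hu₀norm : ‖u₀‖ = 1 := by simpa using hu₀mem
    have hu₀ne : u₀ ≠ 0 := by
      intro h; rw [h] at hu₀norm; simp at hu₀norm
    have hc : 0 < nB u₀ := by
      rcases lt_or_eq_of_le (h0 u₀) with h | h
      · exact h
      · exact absurd (hdef u₀ h.symm) hu₀ne
    refine ⟨nB u₀, hc, fun u => ?_⟩
    rcases eq_or_ne u 0 with rfl | hu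
    · rw [myNB_zero nB hsmul]; simp
    · have hnu : 0 < ‖u‖ := norm_pos_iff.mpr hu
      have hmem : ‖u‖⁻¹ • u ∈ Metric.sphere (0 : EuclideanSpace ℝ (Fin m)) 1 := by
        simp [norm_smul, abs_of_pos (inv_pos.mpr hnu), inv_mul_cancel₀ (ne_of_gt hnu)]
      have := hu₀min hmem
      simp only [Set.mem_setOf_eq] at this
      have hval : nB (‖u‖⁻¹ • u) = ‖u‖⁻¹ * nB u := by
        rw [hsmul, abs_of_pos (inv_pos.mpr hnu)]
      rw [hval] at this
      calc nB u₀ * ‖u‖ ≤ (‖u‖⁻¹ * nB u) * ‖u‖ :=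
            mul_le_mul_of_nonneg_right this (le_of_lt hnu)
        _ = nB u := by field_simp

lemma myNB_pairing (nB : EuclideanSpace ℝ (Fin m) → ℝ)
    (h0 : ∀ v, 0 ≤ nB v)
    (hadd : ∀ v w, nB (v + w) ≤ nB v + nB w)
    (hsmul : ∀ (c : ℝ) v, nB (c • v) = |c| * nB v)
    (hdef : ∀ v, nB v = 0 → v = 0)
    (v : EuclideanSpace ℝ (Fin m)) :
    0 ≤ sSup {r : ℝ | ∃ u, nB u ≤ 1 ∧ r = ⟪v, u⟫} ∧
    ∀ w, |⟪v, w⟫| ≤ sSup {r : ℝ | ∃ u, nB u ≤ 1 ∧ r = ⟪v, u⟫} * nB w := by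
  obtain ⟨c, hc, hlow⟩ := myNB_lower nB h0 hadd hsmul hdef
  set S := {r : ℝ | ∃ u, nB u ≤ 1 ∧ r = ⟪v, u⟫} with hS
  have hmem0 : (0:ℝ) ∈ S := ⟨0, by rw [myNB_zero nB hsmul]; norm_num, by simp⟩
  have hbdd : BddAbove S := by
    refine ⟨‖v‖ * c⁻¹, ?_⟩
    rintro r ⟨u, hu, rfl⟩
    have h1 : ⟪v, u⟫ ≤ ‖v‖ * ‖u‖ := real_inner_le_norm v u
    have h2 : ‖u‖ ≤ c⁻¹ := by
      rw [← one_div, le_div_iff₀ hc]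
      nlinarith [hlow u]
    calc ⟪v, u⟫ ≤ ‖v‖ * ‖u‖ := h1
      _ ≤ ‖v‖ * c⁻¹ := mul_le_mul_of_nonneg_left h2 (norm_nonneg v)
  have hD0 : 0 ≤ sSup S := le_csSup hbdd hmem0
  refine ⟨hD0, fun w => ?_⟩
  rcases eq_or_ne (nB w) 0 with h | h
  · rw [hdef w h]
    simp [myNB_zero nB hsmul, inner_zero_right]
  · have ht : 0 < nB w := lt_of_le_of_ne (h0 w) (Ne.symm h)
    have key : ∀ s : ℝ, |s| = 1 → s * ⟪v, w⟫ ≤ sSup S * nB w := by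
      intro s hs
      have hmem : ((nB w)⁻¹ * s) * ⟪v, w⟫ ∈ S := by
        refine ⟨((nB w)⁻¹ * s) • w, ?_, ?_⟩
        · rw [hsmul, abs_mul, hs, abs_of_pos (inv_pos.mpr ht)]
          rw [mul_one, inv_mul_cancel₀ (ne_of_gt ht)]
        · rw [real_inner_smul_right]
      have hle := le_csSup hbdd hmem
      have : s * ⟪v, w⟫ = nB w * (((nB w)⁻¹ * s) * ⟪v, w⟫) := by
        field_simp
      rw [this, mul_comm (sSup S) (nB w)]
      exact mul_le_mul_of_nonneg_left hle (le_of_lt ht)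
    have k1 := key 1 (by norm_num)
    have k2 := key (-1) (by norm_num)
    rw [abs_le]
    constructor <;> nlinarith

lemma erase_sum_real (p : ℕ) (g : Fin p → ℝ) :
    ∑ i : Fin p, ∑ j ∈ Finset.univ.erase i, g j = ((p:ℝ) - 1) * ∑ j, g j := by
  have h : ∀ i : Fin p, ∑ j ∈ Finset.univ.erase i, g j = (∑ j, g j) - g i :=
    fun i => Finset.sum_erase_eq_sub (Finset.mem_univ i)
  rw [Finset.sum_congr rfl (fun i _ => h i), Finset.sum_sub_distrib, Finset.sum_const,
    Finset.card_univ, Fintype.card_fin]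
  
  ring


theorem rpd_nonEuclidean_lemma
    (n p : ℕ) (hp : 0 < p) (md : Fin p → ℕ)
    (Ys : (i : Fin p) → Set (EuclideanSpace ℝ (Fin (md i))))
    (hYconv : ∀ i, Convex ℝ (Ys i)) (hYcl : ∀ i, IsClosed (Ys i))
    (Js : (i : Fin p) → EuclideanSpace ℝ (Fin (md i)) → ℝ)
    (hJconv : ∀ i, ConvexOn ℝ Set.univ (Js i))
    (A : Primal n →L[ℝ] DualSp md)
    (omX : Primal n → ℝ) (gX : Primal n → Primal n)
    (homXdiff : ∀ v, HasGradientAt omX (gX v) v)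
    (homXconv : ConvexOn ℝ Set.univ omX)
    (nE : Primal n → ℝ)
    (hnE0 : ∀ v, 0 ≤ nE v)
    (hnEadd : ∀ v w, nE (v + w) ≤ nE v + nE w)
    (hnEsmul : ∀ (c : ℝ) v, nE (c • v) = |c| * nE v)
    (hnEdef : ∀ v, nE v = 0 → v = 0)
    (homXstrong : ∀ v w, nE (v - w) ^ 2 ≤ ⟪gX v - gX w, v - w⟫)
    (omB : (i : Fin p) → EuclideanSpace ℝ (Fin (md i)) → ℝ)
    (gB : (i : Fin p) → EuclideanSpace ℝ (Fin (md i)) → EuclideanSpace ℝ (Fin (md i)))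
    (homBdiff : ∀ i v, HasGradientAt (omB i) (gB i v) v)
    (homBconv : ∀ i, ConvexOn ℝ Set.univ (omB i))
    (nB : (i : Fin p) → EuclideanSpace ℝ (Fin (md i)) → ℝ)
    (hnB0 : ∀ i v, 0 ≤ nB i v)
    (hnBadd : ∀ i v w, nB i (v + w) ≤ nB i v + nB i w)
    (hnBsmul : ∀ i (c : ℝ) v, nB i (c • v) = |c| * nB i v)
    (hnBdef : ∀ i v, nB i v = 0 → v = 0)
    (homBstrong : ∀ i v w, nB i (v - w) ^ 2 ≤ ⟪gB i v - gB i w, v - w⟫)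
    (nBd : (i : Fin p) → EuclideanSpace ℝ (Fin (md i)) → ℝ)
    (hnBd : ∀ i v, nBd i v = sSup {r : ℝ | ∃ u, nB i u ≤ 1 ∧ r = ⟪v, u⟫})
    (opA : ℝ) (hopA0 : 0 ≤ opA)
    (hopA : ∀ v : Primal n, Real.sqrt (∑ i, nBd i ((A v) i) ^ 2) ≤ opA * nE v)
    (qprev τt : ℝ) (hτt : 0 < τt)
    (xt xtm xbt : Primal n) (yt : DualSp md) (hyt : ∀ i, yt i ∈ Ys i)
    (ynext : Fin p → DualSp md)
    (hynext : ∀ i : Fin p,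
      ynext i i ∈ Ys i ∧
      (∀ u ∈ Ys i,
        -⟪(A xbt) i, ynext i i⟫ + Js i (ynext i i)
          + τt * (omB i (ynext i i) - omB i (yt i) - ⟪gB i (yt i), ynext i i - yt i⟫)
        ≤ -⟪(A xbt) i, u⟫ + Js i u
          + τt * (omB i u - omB i (yt i) - ⟪gB i (yt i), u - yt i⟫)) ∧
      (∀ j, j ≠ i → ynext i j = yt j))
    (yy : DualSp md) (hyy : ∀ i, yy i ∈ Ys i)
    :
    (∑ i : Fin p,
        (qprev * ⟪(A (xt - xtm)) i, ynext i i - yy i⟫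
          - (∑ j ∈ Finset.univ.erase i, ⟪(A xt) j, yt j - yy j⟫)
          + ∑ j ∈ Finset.univ.erase i, (Js j (yt j) - Js j (yy j)))) / (p : ℝ)
      ≤ ⟪(qprev / (p : ℝ) - ((p : ℝ) - 1) / (p : ℝ)) • A xt - (qprev / (p : ℝ)) • A xtm,
            yt - yy⟫
        + ((p : ℝ) - 1) / (p : ℝ) * ((∑ i, Js i (yt i)) - ∑ i, Js i (yy i))
        + qprev ^ 2 * opA ^ 2 / (2 * (p : ℝ) * τt) * nE (xt - xtm) ^ 2
        + τt / 2 * ((∑ i : Fin p, ∑ j, nB j (ynext i j - yt j) ^ 2) / (p : ℝ)) := by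

  -- scalar abbreviations
  have hp' : (0:ℝ) < p := by exact_mod_cast hp
  -- per-coordinate key inequality
  have hkey : ∀ i : Fin p,
      qprev * ⟪(A (xt - xtm)) i, ynext i i - yt i⟫
        ≤ qprev ^ 2 / (2 * τt) * nBd i ((A (xt - xtm)) i) ^ 2
          + τt / 2 * nB i (ynext i i - yt i) ^ 2 := by
    intro i
    obtain ⟨hD0, hpair⟩ :=
      myNB_pairing (nB i) (hnB0 i) (hnBadd i) (hnBsmul i) (hnBdef i) ((A (xt - xtm)) i)
    rw [← hnBd i ((A (xt - xtm)) i)] at hD0 hpair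
    have habs := hpair (ynext i i - yt i)
    set D := nBd i ((A (xt - xtm)) i)
    set B := nB i (ynext i i - yt i) with hBdef
    have hB0 : 0 ≤ B := hnB0 i _
    set x := ⟪(A (xt - xtm)) i, ynext i i - yt i⟫ with hxdef
    have h1 : qprev * x ≤ |qprev| * (D * B) := by
      calc qprev * x ≤ |qprev * x| := le_abs_self _
        _ = |qprev| * |x| := abs_mul _ _
        _ ≤ |qprev| * (D * B) := mul_le_mul_of_nonneg_left habs (abs_nonneg _)
    have h2 : |qprev| * (D * B) ≤ qprev ^ 2 / (2 * τt) * D ^ 2 + τt / 2 * B ^ 2 := by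
      rw [← sub_nonneg]
      have hexp : qprev ^ 2 / (2 * τt) * D ^ 2 + τt / 2 * B ^ 2 - |qprev| * (D * B)
          = (|qprev| * D - τt * B) ^ 2 / (2 * τt) := by
        field_simp
        linear_combination (-(D ^ 2)) * sq_abs qprev
      rw [hexp]
      positivity
    linarith
  -- sum of dual norms squared bound
  have hF4 : ∑ i, nBd i ((A (xt - xtm)) i) ^ 2 ≤ opA ^ 2 * nE (xt - xtm) ^ 2 := by
    have h1 := hopA (xt - xtm)
    have h2 : 0 ≤ ∑ i, nBd i ((A (xt - xtm)) i) ^ 2 :=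
      Finset.sum_nonneg fun i _ => sq_nonneg _
    have h3 := Real.sq_sqrt h2
    nlinarith [Real.sqrt_nonneg (∑ i, nBd i ((A (xt - xtm)) i) ^ 2),
      mul_nonneg hopA0 (hnE0 (xt - xtm))]
  -- diagonal structure of ynext
  have hF5 : ∀ i : Fin p, ∑ j, nB j (ynext i j - yt j) ^ 2 = nB i (ynext i i - yt i) ^ 2 := by
    intro i
    apply Finset.sum_eq_single_of_mem i (Finset.mem_univ i)
    intro j _ hj
    rw [(hynext i).2.2 j hj, sub_self, myNB_zero (nB j) (hnBsmul j)]
    simp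
  -- inner products as coordinate sums
  have ha : ⟪A xt, yt - yy⟫ = ∑ j, ⟪(A xt) j, yt j - yy j⟫ := by
    rw [PiLp.inner_apply]; rfl
  have hb : ⟪A xtm, yt - yy⟫ = ∑ j, ⟪(A xtm) j, yt j - yy j⟫ := by
    rw [PiLp.inner_apply]; rfl
  have hAd : ∀ j : Fin p, (A (xt - xtm)) j = (A xt) j - (A xtm) j := by
    intro j; rw [map_sub]; rfl
  set At := ⟪A xt, yt - yy⟫ with hAt
  set Am := ⟪A xtm, yt - yy⟫ with hAm
  set Jt := ∑ i, Js i (yt i) with hJt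
  set Jy := ∑ i, Js i (yy i) with hJy
  set SB := ∑ i : Fin p, ∑ j, nB j (ynext i j - yt j) ^ 2 with hSB
  set N := nE (xt - xtm) with hN
  have hab : ∑ j, ⟪(A (xt - xtm)) j, yt j - yy j⟫ = At - Am := by
    rw [ha, hb, ← Finset.sum_sub_distrib]
    exact Finset.sum_congr rfl fun j _ => by rw [hAd j, inner_sub_left]
  -- split each summand
  have hsplit : ∀ i : Fin p,
      qprev * ⟪(A (xt - xtm)) i, ynext i i - yy i⟫
        = qprev * ⟪(A (xt - xtm)) i, yt i - yy i⟫
          + qprev * ⟪(A (xt - xtm)) i, ynext i i - yt i⟫ := by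
    intro i
    have hv : ynext i i - yy i = (yt i - yy i) + (ynext i i - yt i) := by abel
    rw [hv, inner_add_right, mul_add]
  -- the total sum bound
  have htotal : ∑ i : Fin p,
      (qprev * ⟪(A (xt - xtm)) i, ynext i i - yy i⟫
        - (∑ j ∈ Finset.univ.erase i, ⟪(A xt) j, yt j - yy j⟫)
        + ∑ j ∈ Finset.univ.erase i, (Js j (yt j) - Js j (yy j)))
      ≤ qprev * (At - Am) - ((p:ℝ) - 1) * At + ((p:ℝ) - 1) * (Jt - Jy)
        + qprev ^ 2 / (2 * τt) * (opA ^ 2 * N ^ 2) + τt / 2 * SB := by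
    rw [Finset.sum_add_distrib, Finset.sum_sub_distrib]
    have e1 : ∑ i : Fin p, qprev * ⟪(A (xt - xtm)) i, ynext i i - yy i⟫
        ≤ qprev * (At - Am)
          + (qprev ^ 2 / (2 * τt) * (opA ^ 2 * N ^ 2) + τt / 2 * SB) := by
      rw [Finset.sum_congr rfl fun i _ => hsplit i, Finset.sum_add_distrib]
      have e11 : ∑ i : Fin p, qprev * ⟪(A (xt - xtm)) i, yt i - yy i⟫
          = qprev * (At - Am) := by
        rw [← Finset.mul_sum, hab]
      have e12 : ∑ i : Fin p, qprev * ⟪(A (xt - xtm)) i, ynext i i - yt i⟫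
          ≤ qprev ^ 2 / (2 * τt) * (opA ^ 2 * N ^ 2) + τt / 2 * SB := by
        calc ∑ i : Fin p, qprev * ⟪(A (xt - xtm)) i, ynext i i - yt i⟫
            ≤ ∑ i : Fin p, (qprev ^ 2 / (2 * τt) * nBd i ((A (xt - xtm)) i) ^ 2
                + τt / 2 * nB i (ynext i i - yt i) ^ 2) :=
              Finset.sum_le_sum fun i _ => hkey i
          _ = qprev ^ 2 / (2 * τt) * (∑ i, nBd i ((A (xt - xtm)) i) ^ 2)
                + τt / 2 * (∑ i, nB i (ynext i i - yt i) ^ 2) := by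
              rw [Finset.sum_add_distrib, Finset.mul_sum, Finset.mul_sum]
          _ ≤ qprev ^ 2 / (2 * τt) * (opA ^ 2 * N ^ 2) + τt / 2 * SB := by
              have hc1 : 0 ≤ qprev ^ 2 / (2 * τt) := by positivity
              have hc2 : SB = ∑ i, nB i (ynext i i - yt i) ^ 2 :=
                Finset.sum_congr rfl fun i _ => hF5 i
              rw [hc2]
              exact add_le_add (mul_le_mul_of_nonneg_left hF4 hc1) le_rfl
      linarith
    have e2 : ∑ i : Fin p, ∑ j ∈ Finset.univ.erase i, ⟪(A xt) j, yt j - yy j⟫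
        = ((p:ℝ) - 1) * At := by
      rw [erase_sum_real p (fun j => ⟪(A xt) j, yt j - yy j⟫), ha]
    have e3 : ∑ i : Fin p, ∑ j ∈ Finset.univ.erase i, (Js j (yt j) - Js j (yy j))
        = ((p:ℝ) - 1) * (Jt - Jy) := by
      rw [erase_sum_real p (fun j => Js j (yt j) - Js j (yy j)), hJt, hJy,
        Finset.sum_sub_distrib]
    rw [e2, e3]
    linarith
  -- rewrite the RHS inner product
  have hrhs : ⟪(qprev / (p : ℝ) - ((p : ℝ) - 1) / (p : ℝ)) • A xt - (qprev / (p : ℝ)) • A xtm,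
        yt - yy⟫
      = (qprev / (p : ℝ) - ((p : ℝ) - 1) / (p : ℝ)) * At - (qprev / (p : ℝ)) * Am := by
    rw [inner_sub_left, real_inner_smul_left, real_inner_smul_left, ← hAt, ← hAm]
  rw [hrhs, div_le_iff₀ hp']
  have hfinal : ((qprev / (p : ℝ) - ((p : ℝ) - 1) / (p : ℝ)) * At - (qprev / (p : ℝ)) * Am
        + ((p : ℝ) - 1) / (p : ℝ) * (Jt - Jy)
        + qprev ^ 2 * opA ^ 2 / (2 * (p : ℝ) * τt) * N ^ 2
        + τt / 2 * (SB / (p : ℝ))) * (p : ℝ)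
      = qprev * (At - Am) - ((p:ℝ) - 1) * At + ((p:ℝ) - 1) * (Jt - Jy)
        + qprev ^ 2 / (2 * τt) * (opA ^ 2 * N ^ 2) + τt / 2 * SB := by
    field_simp
    ring
  rw [hfinal]
  exact htotal
end
end
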